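/- There exist constants c > 0, C > 0, and R* > 0 such that for every R with 0 < R < R*, the function F_R(μ) := (2 − 8πR²)·( cos(μR)/(μR²) − sin(μR)/(μ²R³) ) + sin(μR)/R, μ > 0, possesses a smallest positive zero μ₁(R), and this smallest zero satisfies c/R ≤ μ₁(R) ≤ C/R. In particular, the lowest oscillation frequency √λ₁ of a small hard star scales like the reciprocal of its radius: √λ₁ ∼ R⁻¹ as R → 0. -/

import Mathlib

open Real Set

noncomputable section

/-- The leading-order boundary-condition function
`F_R(μ) = (2 − 8πR²)·( cos(μR)/(μR²) − sin(μR)/(μ²R³) ) + sin(μR)/R`. -/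
def FR (R μ : ℝ) : ℝ :=
  (2 - 8 * π * R ^ 2) *
      (Real.cos (μ * R) / (μ * R ^ 2) - Real.sin (μ * R) / (μ ^ 2 * R ^ 3)) +
    Real.sin (μ * R) / R

def G (a x : ℝ) : ℝ := a * (x * Real.cos x - Real.sin x) + x ^ 2 * Real.sin x

lemma Gpos {a x : ℝ} (ha0 : 0 < a) (ha : a ≤ 2) (hx : 0 < x) (hx1 : x ≤ 1/2) : 0 < G a x := by
  have hax : |x| ≤ 1 := by rw [abs_of_pos hx]; linarith
  have hs := abs_le.1 (Real.sin_bound hax)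
  have hc := abs_le.1 (Real.cos_bound hax)
  rw [abs_of_pos hx] at hs hc
  -- x*cos x - sin x ≥ -x^3/3 - 5/96*(x^5 + x^4)
  have h1 : x * Real.cos x - Real.sin x ≥ -x^3/3 - 5/96*(x^5 + x^4) := by nlinarith
  have h2 : x^2 * Real.sin x ≥ x^3 - x^5/6 - 5/96*x^6 := by
    nlinarith [mul_le_mul_of_nonneg_left hs.1 (sq_nonneg x), mul_nonneg (pow_pos hx 6).le (by linarith : (0:ℝ) ≤ 5/96 - x/100)]
  have h3 : a * (x * Real.cos x - Real.sin x) ≥ 2 * (-x^3/3 - 5/96*(x^5 + x^4)) := by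
    have hneg : -x^3/3 - 5/96*(x^5 + x^4) ≤ 0 := by nlinarith
    rcases le_or_gt 0 (x * Real.cos x - Real.sin x) with h | h
    · nlinarith [mul_nonneg (le_of_lt ha0) h]
    · nlinarith [mul_le_mul_of_nonpos_right ha (le_of_lt h)]
  have hx4 : x^4 ≤ x^3/2 := by nlinarith
  have hx5 : x^5 ≤ x^3/4 := by nlinarith
  have hx6 : x^6 ≤ x^3/8 := by nlinarith
  have : G a x ≥ 2 * (-x^3/3 - 5/96*(x^5 + x^4)) + (x^3 - x^5/6 - 5/96*x^6) := by
    unfold G; linarith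
  nlinarith [pow_pos hx 3]

lemma Gcont (a : ℝ) : Continuous (G a) := by
  unfold G; fun_prop

/-- For all sufficiently small `R`, `F_R` has a smallest positive zero `μ₁(R)`, and
`μ₁(R) ∼ R⁻¹`: the lowest oscillation frequency of a small hard star scales like
the reciprocal of its radius. -/
theorem stmt18 :
    ∃ c > (0:ℝ), ∃ C > (0:ℝ), ∃ Rstar > (0:ℝ), ∀ R : ℝ, 0 < R → R < Rstar →
      ∃ μ₁ > (0:ℝ), FR R μ₁ = 0 ∧ (∀ μ : ℝ, 0 < μ → FR R μ = 0 → μ₁ ≤ μ) ∧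
        c / R ≤ μ₁ ∧ μ₁ ≤ C / R := by
  refine ⟨1/2, by norm_num, π, Real.pi_pos, 1/4, by norm_num, ?_⟩
  intro R hR hR4
  set a := 2 - 8 * π * R ^ 2 with ha_def
  have hpi : (3 : ℝ) < π := Real.pi_gt_three
  have hpi4 : π < 3.15 := Real.pi_lt_d2
  have haub : a ≤ 2 := by nlinarith [Real.pi_pos]
  have halb : 0 < a := by nlinarith
  -- FR R μ = G a (μ R) / (μ^2 R^3)
  have key : ∀ μ : ℝ, 0 < μ → FR R μ = G a (μ * R) / (μ ^ 2 * R ^ 3) := by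
    intro μ hμ
    have hμR : μ * R ≠ 0 := by positivity
    have h1 : μ * R ^ 2 ≠ 0 := by positivity
    have h2 : μ ^ 2 * R ^ 3 ≠ 0 := by positivity
    have hRne : R ≠ 0 := ne_of_gt hR
    unfold FR G
    field_simp
    ring
  have hzero_iff : ∀ μ : ℝ, 0 < μ → (FR R μ = 0 ↔ G a (μ * R) = 0) := by
    intro μ hμ
    rw [key μ hμ, div_eq_zero_iff]
    have : μ ^ 2 * R ^ 3 ≠ 0 := by positivity
    tauto
  -- G a (1/2) > 0, G a π < 0
  have hGhalf : 0 < G a (1/2) := Gpos halb haub (by norm_num) (le_refl _)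
  have hGpi : G a π < 0 := by
    unfold G
    rw [Real.cos_pi, Real.sin_pi]
    nlinarith [Real.pi_pos]
  -- zero in (1/2, π)
  obtain ⟨x₀, hx₀mem, hx₀⟩ := intermediate_value_Icc' (by linarith : (1/2:ℝ) ≤ π)
    (Gcont a).continuousOn (⟨le_of_lt hGpi, le_of_lt hGhalf⟩ : (0:ℝ) ∈ Icc (G a π) (G a (1/2)))
  -- the set of zeros ≥ 1/2
  set S : Set ℝ := {x | 1/2 ≤ x ∧ G a x = 0} with hS_def
  have hSclosed : IsClosed S := by
    have : S = Ici (1/2) ∩ (G a) ⁻¹' {0} := by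
      ext x; simp [hS_def, Set.mem_Ici]
    rw [this]
    exact isClosed_Ici.inter (isClosed_singleton.preimage (Gcont a))
  have hx₀S : x₀ ∈ S := ⟨hx₀mem.1, hx₀⟩
  have hSne : S.Nonempty := ⟨x₀, hx₀S⟩
  have hSbdd : BddBelow S := ⟨1/2, fun x hx => hx.1⟩
  set x₁ := sInf S with hx₁_def
  have hx₁S : x₁ ∈ S := hSclosed.csInf_mem hSne hSbdd
  have hx₁half : 1/2 ≤ x₁ := hx₁S.1
  have hx₁pi : x₁ ≤ π := le_trans (csInf_le hSbdd hx₀S) hx₀mem.2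
  refine ⟨x₁ / R, by positivity, ?_, ?_, ?_, ?_⟩
  · rw [hzero_iff _ (by positivity)]
    rw [div_mul_cancel₀ _ (ne_of_gt hR)]
    exact hx₁S.2
  · intro μ hμ hFμ
    rw [hzero_iff μ hμ] at hFμ
    have hμR : 0 < μ * R := by positivity
    have h12 : 1/2 ≤ μ * R := by
      by_contra h
      push_neg at h
      exact absurd hFμ (ne_of_gt (Gpos halb haub hμR (le_of_lt h)))
    have : x₁ ≤ μ * R := csInf_le hSbdd ⟨h12, hFμ⟩
    rw [div_le_iff₀ hR]
    linarith
  · exact div_le_div_of_nonneg_right hx₁half hR.le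
  · exact div_le_div_of_nonneg_right hx₁pi hR.le


end
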